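/- Menelaus' theorem in the hyperbolic plane: if a hyperbolic line l does not pass through any vertex of a hyperbolic triangle ABC and meets line BC in Q, line CA in R, and line AB in P, then s(A,P,B)·s(B,Q,C)·s(C,R,A) = −1, where s(X,Z,Y) = ± sinh(d(X,Z))/sinh(d(Z,Y)) with sign + if Z is between X and Y and − otherwise. -/

import Mathlib

open Real Classical

/-- Lorentz bilinear form on ℝ³. -/
def lorentz (P Q : Fin 3 → ℝ) : ℝ := P 0 * Q 0 - P 1 * Q 1 - P 2 * Q 2

/-- Points of the hyperboloid model of H². -/
def onH (P : Fin 3 → ℝ) : Prop := 0 < P 0 ∧ lorentz P P = 1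

/-- Inverse hyperbolic cosine. -/
noncomputable def arcosh (x : ℝ) : ℝ := Real.log (x + Real.sqrt (x ^ 2 - 1))

/-- Hyperbolic distance in the hyperboloid model. -/
noncomputable def dH (P Q : Fin 3 → ℝ) : ℝ := _root_.arcosh (lorentz P Q)

/-- `P` lies between `A` and `B` on their common hyperbolic line (nonnegative
cone combination in the hyperboloid model). -/
def BtwH (A P B : Fin 3 → ℝ) : Prop := ∃ s t : ℝ, 0 ≤ s ∧ 0 ≤ t ∧ P = s • A + t • B

/-- Signed simple ratio of three distinct collinear points of H². -/
noncomputable def sRatio (A P B : Fin 3 → ℝ) : ℝ :=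
  (if BtwH A P B then 1 else -1) * (Real.sinh (dH A P) / Real.sinh (dH P B))

lemma lorentz_ge_one {A B : Fin 3 → ℝ} (hA : onH A) (hB : onH B) : 1 ≤ lorentz A B := by
  obtain ⟨hA0, hA1⟩ := hA
  obtain ⟨hB0, hB1⟩ := hB
  unfold lorentz at *
  have ha1 : 1 ≤ A 0 := by nlinarith [sq_nonneg (A 1), sq_nonneg (A 2)]
  have hb1 : 1 ≤ B 0 := by nlinarith [sq_nonneg (B 1), sq_nonneg (B 2)]
  have hab : 0 ≤ A 0 * B 0 - 1 := by nlinarith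
  have key : (A 0 * B 0 - 1)^2 - (A 1 * B 1 + A 2 * B 2)^2
      = (A 0 - B 0)^2 + (A 1 * B 2 - A 2 * B 1)^2 := by
    linear_combination (B 0 * B 0 - 1) * hA1 + (A 1 * A 1 + A 2 * A 2) * hB1
  nlinarith [key, hab, sq_nonneg (A 0 - B 0), sq_nonneg (A 1 * B 2 - A 2 * B 1),
    sq_nonneg (A 0 * B 0 - 1 + (A 1 * B 1 + A 2 * B 2))]


lemma sinh_arcosh {x : ℝ} (hx : 1 ≤ x) : Real.sinh (_root_.arcosh x) = Real.sqrt (x ^ 2 - 1) := by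
  have h1 : 0 ≤ x ^ 2 - 1 := by nlinarith
  have hs : Real.sqrt (x ^ 2 - 1) ^ 2 = x ^ 2 - 1 := Real.sq_sqrt h1
  have hy : 0 < x + Real.sqrt (x ^ 2 - 1) := by positivity
  rw [_root_.arcosh, Real.sinh_log hy]
  have hm : (x + Real.sqrt (x ^ 2 - 1)) * (x - Real.sqrt (x ^ 2 - 1)) = 1 := by nlinarith [hs]
  rw [inv_eq_of_mul_eq_one_right hm]; ring


lemma sinh_dH {A B : Fin 3 → ℝ} (hA : onH A) (hB : onH B) :
    Real.sinh (dH A B) = Real.sqrt (lorentz A B ^ 2 - 1) :=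
  _root_.sinh_arcosh (lorentz_ge_one hA hB)

lemma eq_of_lorentz_eq_one {A B : Fin 3 → ℝ} (hA : onH A) (hB : onH B)
    (h : lorentz A B = 1) : A = B := by
  obtain ⟨hA0, hA1⟩ := hA
  obtain ⟨hB0, hB1⟩ := hB
  unfold lorentz at h hA1 hB1
  have key : (A 0 * B 0 - 1)^2 - (A 1 * B 1 + A 2 * B 2)^2
      = (A 0 - B 0)^2 + (A 1 * B 2 - A 2 * B 1)^2 := by
    linear_combination (B 0 * B 0 - 1) * hA1 + (A 1 * A 1 + A 2 * A 2) * hB1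
  have hz : (A 0 - B 0)^2 + (A 1 * B 2 - A 2 * B 1)^2 = 0 := by
    linear_combination (A 0 * B 0 - 1 + (A 1 * B 1 + A 2 * B 2)) * h - key
  have e0 : (A 0 - B 0)^2 = 0 := by nlinarith [sq_nonneg (A 0 - B 0), sq_nonneg (A 1 * B 2 - A 2 * B 1)]
  have h0 : A 0 = B 0 := by have := pow_eq_zero_iff (n := 2) (by norm_num) |>.mp e0; linarith
  have h12 : (A 1 - B 1)^2 + (A 2 - B 2)^2 = 0 := by
    linear_combination -hA1 - hB1 + 2*h + (A 0 - B 0) * h0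
  have e1 : (A 1 - B 1)^2 = 0 := by nlinarith [sq_nonneg (A 1 - B 1), sq_nonneg (A 2 - B 2)]
  have e2 : (A 2 - B 2)^2 = 0 := by nlinarith [sq_nonneg (A 1 - B 1), sq_nonneg (A 2 - B 2)]
  have h1 : A 1 = B 1 := by have := pow_eq_zero_iff (n := 2) (by norm_num) |>.mp e1; linarith
  have h2 : A 2 = B 2 := by have := pow_eq_zero_iff (n := 2) (by norm_num) |>.mp e2; linarith
  funext i; fin_cases i <;> assumption


lemma sRatio_eq {A B P : Fin 3 → ℝ} (hA : onH A) (hB : onH B) (hP : onH P)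
    (hind : LinearIndependent ℝ ![A, B]) {a b : ℝ}
    (hPe : P = a • A + b • B) (ha : a ≠ 0) (hb : b ≠ 0) :
    sRatio A P B = b / a := by
  have hAB : A ≠ B := by
    intro h
    have := (LinearIndependent.pair_iff.mp hind) 1 (-1) (by rw [h]; module)
    simpa using this.1
  obtain ⟨k, hk⟩ : ∃ k, k = A 0 * B 0 - A 1 * B 1 - A 2 * B 2 := ⟨_, rfl⟩
  have hkL : lorentz A B = k := hk.symm
  have hk1 : 1 < k := by
    rcases lt_or_eq_of_le (lorentz_ge_one hA hB) with h | h
    · rwa [hkL] at h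
    · exact absurd (eq_of_lorentz_eq_one hA hB h.symm) hAB
  have hA2 : A 0 * A 0 - A 1 * A 1 - A 2 * A 2 = 1 := hA.2
  have hB2 : B 0 * B 0 - B 1 * B 1 - B 2 * B 2 = 1 := hB.2
  have hcomp : ∀ i, P i = a * A i + b * B i := by intro i; rw [hPe]; simp
  subst hk
  have hPP : a^2 + 2*a*b*(A 0 * B 0 - A 1 * B 1 - A 2 * B 2) + b^2 = 1 := by
    have h := hP.2
    unfold lorentz at h
    rw [hcomp 0, hcomp 1, hcomp 2] at h
    linear_combination h - a^2 * hA2 - b^2 * hB2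
  have hAP : lorentz A P = a + b * (A 0 * B 0 - A 1 * B 1 - A 2 * B 2) := by
    unfold lorentz
    rw [hcomp 0, hcomp 1, hcomp 2]
    linear_combination a * hA2
  have hPB : lorentz P B = a * (A 0 * B 0 - A 1 * B 1 - A 2 * B 2) + b := by
    unfold lorentz
    rw [hcomp 0, hcomp 1, hcomp 2]
    linear_combination b * hB2
  have hsq : 0 < Real.sqrt ((A 0 * B 0 - A 1 * B 1 - A 2 * B 2)^2 - 1) := Real.sqrt_pos.mpr (by nlinarith)
  have e1 : Real.sinh (dH A P) = |b| * Real.sqrt ((A 0 * B 0 - A 1 * B 1 - A 2 * B 2)^2 - 1) := by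
    rw [sinh_dH hA hP, hAP, show (a + b*(A 0 * B 0 - A 1 * B 1 - A 2 * B 2))^2 - 1 = b^2 * ((A 0 * B 0 - A 1 * B 1 - A 2 * B 2)^2 - 1) by linear_combination hPP,
      Real.sqrt_mul (sq_nonneg b), Real.sqrt_sq_eq_abs]
  have e2 : Real.sinh (dH P B) = |a| * Real.sqrt ((A 0 * B 0 - A 1 * B 1 - A 2 * B 2)^2 - 1) := by
    rw [sinh_dH hP hB, hPB, show (a*(A 0 * B 0 - A 1 * B 1 - A 2 * B 2) + b)^2 - 1 = a^2 * ((A 0 * B 0 - A 1 * B 1 - A 2 * B 2)^2 - 1) by linear_combination hPP,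
      Real.sqrt_mul (sq_nonneg a), Real.sqrt_sq_eq_abs]
  have hbtw : BtwH A P B ↔ (0 ≤ a ∧ 0 ≤ b) := by
    constructor
    · rintro ⟨s, t, hs, ht, hst⟩
      have h0 : (s - a) • A + (t - b) • B = 0 := by
        have := hst.symm.trans hPe
        rw [sub_smul, sub_smul]
        linear_combination (norm := module) this
      obtain ⟨hsa, htb⟩ := (LinearIndependent.pair_iff.mp hind) _ _ h0
      constructor <;> [linarith [hsa]; linarith [htb]]
    · rintro ⟨ha', hb'⟩; exact ⟨a, b, ha', hb', hPe⟩
  have hratio : Real.sinh (dH A P) / Real.sinh (dH P B) = |b| / |a| := by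
    rw [e1, e2, mul_div_mul_right _ _ (ne_of_gt hsq)]
  have hnotneg : ¬ (a < 0 ∧ b < 0) := by
    rintro ⟨ha', hb'⟩
    have := hP.1
    rw [hcomp 0] at this
    nlinarith [hA.1, hB.1]
  rw [sRatio, hratio]
  rcases lt_or_gt_of_ne ha with han | hap <;> rcases lt_or_gt_of_ne hb with hbn | hbp
  · exact absurd ⟨han, hbn⟩ hnotneg
  · rw [if_neg (fun h => absurd ((hbtw.mp h).1) (not_le.mpr han)),
      abs_of_pos hbp, abs_of_neg han]; field_simp
  · rw [if_neg (fun h => absurd ((hbtw.mp h).2) (not_le.mpr hbn)),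
      abs_of_neg hbn, abs_of_pos hap]; field_simp
  · rw [if_pos (hbtw.mpr ⟨le_of_lt hap, le_of_lt hbp⟩), abs_of_pos hbp, abs_of_pos hap]; ring

/-- Menelaus' theorem in the hyperbolic plane: if a hyperbolic line
(given by a plane through the origin with normal `n`) avoids the vertices of a
nondegenerate triangle `A B C` and meets the side lines `BC`, `CA`, `AB` in
`Q`, `R`, `P` respectively, then s(A,P,B)·s(B,Q,C)·s(C,R,A) = −1. -/
theorem hyperbolic_menelaus (A B C P Q R n : Fin 3 → ℝ)
    (hA : onH A) (hB : onH B) (hC : onH C)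
    (hP : onH P) (hQ : onH Q) (hR : onH R)
    (hABC : LinearIndependent ℝ ![A, B, C])
    (hn : n ≠ 0)
    (hnA : n 0 * A 0 + n 1 * A 1 + n 2 * A 2 ≠ 0)
    (hnB : n 0 * B 0 + n 1 * B 1 + n 2 * B 2 ≠ 0)
    (hnC : n 0 * C 0 + n 1 * C 1 + n 2 * C 2 ≠ 0)
    (hQmem : Q ∈ Submodule.span ℝ ({B, C} : Set (Fin 3 → ℝ)))
    (hQl : n 0 * Q 0 + n 1 * Q 1 + n 2 * Q 2 = 0)
    (hRmem : R ∈ Submodule.span ℝ ({C, A} : Set (Fin 3 → ℝ)))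
    (hRl : n 0 * R 0 + n 1 * R 1 + n 2 * R 2 = 0)
    (hPmem : P ∈ Submodule.span ℝ ({A, B} : Set (Fin 3 → ℝ)))
    (hPl : n 0 * P 0 + n 1 * P 1 + n 2 * P 2 = 0) :
    sRatio A P B * sRatio B Q C * sRatio C R A = -1 := by
  rw [Fintype.linearIndependent_iff] at hABC
  have tri : ∀ g0 g1 g2 : ℝ, g0 • A + g1 • B + g2 • C = 0 → g0 = 0 ∧ g1 = 0 ∧ g2 = 0 := by
    intro g0 g1 g2 h
    have h' : ∑ i : Fin 3, ![g0, g1, g2] i • ![A, B, C] i = 0 := by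
      simpa [Fin.sum_univ_three] using h
    exact ⟨hABC _ h' 0, hABC _ h' 1, hABC _ h' 2⟩
  have iAB : LinearIndependent ℝ ![A, B] := LinearIndependent.pair_iff.mpr fun s t h => by
    have := tri s t 0 (by simpa using h); exact ⟨this.1, this.2.1⟩
  have iBC : LinearIndependent ℝ ![B, C] := LinearIndependent.pair_iff.mpr fun s t h => by
    have := tri 0 s t (by simpa using h); exact ⟨this.2.1, this.2.2⟩
  have iCA : LinearIndependent ℝ ![C, A] := LinearIndependent.pair_iff.mpr fun s t h => by
    have := tri t 0 s (by linear_combination (norm := module) h)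
    exact ⟨this.2.2, this.1⟩
  obtain ⟨a1, b1, hP1⟩ := Submodule.mem_span_pair.mp hPmem
  obtain ⟨a2, b2, hQ1⟩ := Submodule.mem_span_pair.mp hQmem
  obtain ⟨a3, b3, hR1⟩ := Submodule.mem_span_pair.mp hRmem
  have hPc : ∀ i, P i = a1 * A i + b1 * B i := fun i => by rw [← hP1]; simp
  have hQc : ∀ i, Q i = a2 * B i + b2 * C i := fun i => by rw [← hQ1]; simp
  have hRc : ∀ i, R i = a3 * C i + b3 * A i := fun i => by rw [← hR1]; simp
  set fA := n 0 * A 0 + n 1 * A 1 + n 2 * A 2 with hfA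
  set fB := n 0 * B 0 + n 1 * B 1 + n 2 * B 2 with hfB
  set fC := n 0 * C 0 + n 1 * C 1 + n 2 * C 2 with hfC
  have l1 : a1 * fA + b1 * fB = 0 := by
    rw [hPc 0, hPc 1, hPc 2] at hPl; rw [hfA, hfB]; linear_combination hPl
  have l2 : a2 * fB + b2 * fC = 0 := by
    rw [hQc 0, hQc 1, hQc 2] at hQl; rw [hfB, hfC]; linear_combination hQl
  have l3 : a3 * fC + b3 * fA = 0 := by
    rw [hRc 0, hRc 1, hRc 2] at hRl; rw [hfC, hfA]; linear_combination hRl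
  have key : ∀ (X Y Z : Fin 3 → ℝ) (u v fX fY : ℝ), onH Z →
      u * fX + v * fY = 0 → fX ≠ 0 → fY ≠ 0 →
      (∀ i, Z i = u * X i + v * Y i) → u ≠ 0 ∧ v ≠ 0 := by
    intro X Y Z u v fX fY hZ hl hfX hfY hc
    constructor
    · intro hu
      have hv : v = 0 := by
        have : v * fY = 0 := by rw [hu] at hl; linarith
        exact (mul_eq_zero.mp this).resolve_right hfY
      have : Z 0 = 0 := by rw [hc 0, hu, hv]; ring
      exact absurd this (ne_of_gt hZ.1)
    · intro hv
      have hu : u = 0 := by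
        have : u * fX = 0 := by rw [hv] at hl; linarith
        exact (mul_eq_zero.mp this).resolve_right hfX
      have : Z 0 = 0 := by rw [hc 0, hu, hv]; ring
      exact absurd this (ne_of_gt hZ.1)
  obtain ⟨ha1, hb1⟩ := key A B P a1 b1 fA fB hP l1 hnA hnB hPc
  obtain ⟨ha2, hb2⟩ := key B C Q a2 b2 fB fC hQ l2 hnB hnC hQc
  obtain ⟨ha3, hb3⟩ := key C A R a3 b3 fC fA hR l3 hnC hnA hRc
  rw [sRatio_eq hA hB hP iAB hP1.symm ha1 hb1,
    sRatio_eq hB hC hQ iBC hQ1.symm ha2 hb2,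
    sRatio_eq hC hA hR iCA hR1.symm ha3 hb3]
  have e1 : b1 = -a1 * fA / fB := by field_simp; linarith
  have e2 : b2 = -a2 * fB / fC := by field_simp; linarith
  have e3 : b3 = -a3 * fC / fA := by field_simp; linarith
  rw [e1, e2, e3]
  field_simp
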